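/- Let R : V → H be a surjective bounded linear operator between real Hilbert spaces, B : V → V a bounded self-adjoint coercive operator that is bijective with bounded inverse B⁻¹, and D : H → V a bounded linear map satisfying R(D y) = y for all y ∈ H and (B(D y), k)_V = 0 for all y ∈ H and all k ∈ ker R. Then the bounded operator R ∘ B⁻¹ ∘ R* : H → H is a two-sided inverse of D* ∘ B ∘ D : H → H, i.e. (R B⁻¹ R*) ∘ (D* B D) = Id_H and (D* B D) ∘ (R B⁻¹ R*) = Id_H. -/

import Mathlib

open RealInnerProductSpace

/-- Let `R : V → H` be a surjective bounded linear operator between real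
Hilbert spaces, `B : V → V` a bounded self-adjoint coercive operator with bounded inverse
`B'`, and `D : H → V` the `B`-weighted pseudoinverse of `R` (a bounded linear right
inverse of `R` whose values are `B`-orthogonal to `ker R`). Then `R ∘ B' ∘ R*` is a
two-sided inverse of `D* ∘ B ∘ D` on `H`. -/
theorem statement4
    {V H : Type*} [NormedAddCommGroup V] [InnerProductSpace ℝ V] [CompleteSpace V]
    [NormedAddCommGroup H] [InnerProductSpace ℝ H] [CompleteSpace H]
    (R : V →L[ℝ] H) (hR : Function.Surjective R)
    (B : V →L[ℝ] V)
    (hBsa : ∀ x z : V, ⟪B x, z⟫ = ⟪x, B z⟫)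
    (c : ℝ) (hc : 0 < c) (hBcoer : ∀ x : V, c * ‖x‖ ^ 2 ≤ ⟪B x, x⟫)
    (B' : V →L[ℝ] V) (hB'l : ∀ x : V, B' (B x) = x) (hB'r : ∀ x : V, B (B' x) = x)
    (D : H →L[ℝ] V)
    (hD1 : ∀ y : H, R (D y) = y)
    (hD2 : ∀ y : H, ∀ k ∈ LinearMap.ker (R : V →ₗ[ℝ] H), ⟪B (D y), k⟫ = 0) :
    (∀ u : H, R (B' (ContinuousLinearMap.adjoint R
        (ContinuousLinearMap.adjoint D (B (D u))))) = u) ∧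
    (∀ u : H, ContinuousLinearMap.adjoint D
        (B (D (R (B' (ContinuousLinearMap.adjoint R u))))) = u) := by
  -- D* R* = id
  have hDR : ∀ u : H, ContinuousLinearMap.adjoint D (ContinuousLinearMap.adjoint R u) = u := by
    intro u
    apply ext_inner_right ℝ
    intro y
    rw [ContinuousLinearMap.adjoint_inner_left, ContinuousLinearMap.adjoint_inner_left, hD1]
  -- key: D* (B (D (R x))) = D* (B x) for all x
  have hkey : ∀ x : V, ContinuousLinearMap.adjoint D (B (D (R x)))
      = ContinuousLinearMap.adjoint D (B x) := by
    intro x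
    apply ext_inner_right ℝ
    intro y
    rw [ContinuousLinearMap.adjoint_inner_left, ContinuousLinearMap.adjoint_inner_left]
    have hker : D (R x) - x ∈ LinearMap.ker (R : V →ₗ[ℝ] H) := by
      simp [LinearMap.mem_ker, hD1]
    have h1 : ⟪B (D y), D (R x) - x⟫ = 0 := hD2 y _ hker
    have h2 : ⟪B (D (R x) - x), D y⟫ = 0 := by
      rw [hBsa, real_inner_comm]; exact h1
    have h3 : ⟪B (D (R x)) - B x, D y⟫ = 0 := by
      rw [← map_sub]; exact h2
    rw [inner_sub_left, sub_eq_zero] at h3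
    exact h3
  -- second identity
  have hsecond : ∀ u : H, ContinuousLinearMap.adjoint D
      (B (D (R (B' (ContinuousLinearMap.adjoint R u))))) = u := by
    intro u
    rw [hkey, hB'r, hDR]
  refine ⟨?_, hsecond⟩
  -- injectivity of C := D* B D
  have hCinj : ∀ u : H, ContinuousLinearMap.adjoint D (B (D u)) = 0 → u = 0 := by
    intro u hu
    have h0 : ⟪ContinuousLinearMap.adjoint D (B (D u)), u⟫ = 0 := by rw [hu, inner_zero_left]
    rw [ContinuousLinearMap.adjoint_inner_left] at h0
    have hD0 : D u = 0 := by
      have := hBcoer (D u)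
      rw [h0] at this
      have h1 : ‖D u‖ ^ 2 ≤ 0 := by nlinarith [sq_nonneg ‖D u‖]
      have h2 : ‖D u‖ ^ 2 = 0 := le_antisymm h1 (sq_nonneg _)
      have h3 : ‖D u‖ = 0 := by
        have := pow_eq_zero_iff (n := 2) (by norm_num) |>.mp h2
        exact this
      exact norm_eq_zero.mp h3
    have : R (D u) = 0 := by rw [hD0, map_zero]
    rwa [hD1] at this
  intro u
  have h := hsecond (ContinuousLinearMap.adjoint D (B (D u)))
  -- h : C (A (C u)) = C u
  have hdiff : ContinuousLinearMap.adjoint D (B (D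
      (R (B' (ContinuousLinearMap.adjoint R (ContinuousLinearMap.adjoint D (B (D u))))) - u))) = 0 := by
    rw [map_sub, map_sub, map_sub, h, sub_self]
  have := hCinj _ hdiff
  exact sub_eq_zero.mp this
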